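/- For μ, Δ > 0 and 0 < α < 1 and Var(Λ) > 0, the scaled variance Var(M^{(N)}) = N·E[Λ]/μ + N²·((1 - e^{-μΔN^{-α}})/(1 + e^{-μΔN^{-α}}))·Var(Λ)/μ² satisfies Var(M^{(N)})/N^{2-α} → Δ·Var(Λ)/(2μ) as N → ∞. -/

import Mathlib

open Real Filter

lemma aux_g_tendsto : Tendsto (fun x : ℝ => (1 - Real.exp (-x)) / (x * (1 + Real.exp (-x))))
    (nhdsWithin (0:ℝ) {x | x ≠ 0}) (nhds (1/2)) := by
  have h1 : HasDerivAt (fun x : ℝ => 1 - Real.exp (-x)) 1 0 := by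
    have h := ((Real.hasDerivAt_exp (-0)).comp 0 (hasDerivAt_neg 0))
    have h2 := (hasDerivAt_const (0:ℝ) (1:ℝ)).sub h
    simp at h2; exact h2
  have hs := hasDerivAt_iff_tendsto_slope.mp h1
  have hslope : Tendsto (fun x : ℝ => (1 - Real.exp (-x)) / x)
      (nhdsWithin (0:ℝ) {x | x ≠ 0}) (nhds 1) := by
    refine hs.congr' ?_
    filter_upwards [self_mem_nhdsWithin] with x hx
    simp [slope_def_field]
  have hden : Tendsto (fun x : ℝ => 1 + Real.exp (-x))
      (nhdsWithin (0:ℝ) {x | x ≠ 0}) (nhds 2) := by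
    have hc : Continuous (fun x : ℝ => 1 + Real.exp (-x)) := by continuity
    have := (hc.tendsto 0).mono_left (nhdsWithin_le_nhds (s := {x | x ≠ 0}))
    norm_num at this ⊢; simpa using this
  have h := hslope.div hden (by norm_num)
  have : (fun x : ℝ => (1 - Real.exp (-x)) / (x * (1 + Real.exp (-x)))) =
      (fun x : ℝ => (1 - Real.exp (-x)) / x) / (fun x : ℝ => 1 + Real.exp (-x)) := by
    funext x; simp [Pi.div_apply, div_div]
  rw [this]
  simpa using h

/-- slow regime, `0 < α < 1`: `Var(M^{(N)})/N^{2-α} → Δ·Var(Λ)/(2μ)`. -/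
theorem variance_trichotomy_slow
    (μ Δ α : ℝ) (hμ : 0 < μ) (hΔ : 0 < Δ) (hα0 : 0 < α) (hα1 : α < 1)
    (EΛ VarΛ : ℝ) (hEΛ : 0 ≤ EΛ) (hVarΛ : 0 < VarΛ)
    (VarM : ℕ → ℝ)
    (hVarM : ∀ N : ℕ, VarM N =
        (N : ℝ) * EΛ / μ +
        (N : ℝ) ^ 2 * ((1 - Real.exp (-(μ * Δ * (N : ℝ) ^ (-α)))) /
          (1 + Real.exp (-(μ * Δ * (N : ℝ) ^ (-α))))) * VarΛ / μ ^ 2) :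
    Tendsto (fun N : ℕ => VarM N / (N : ℝ) ^ ((2 : ℝ) - α)) atTop
      (nhds (Δ * VarΛ / (2 * μ))) := by
  set x : ℕ → ℝ := fun N => μ * Δ * (N : ℝ) ^ (-α) with hxdef
  -- x N → 0 within {≠ 0}
  have hxpos : ∀ N : ℕ, 1 ≤ N → 0 < x N := by
    intro N hN
    have : (0:ℝ) < (N:ℝ) := by exact_mod_cast hN
    exact mul_pos (mul_pos hμ hΔ) (Real.rpow_pos_of_pos this _)
  have hx0 : Tendsto x atTop (nhds 0) := by
    have h1 : Tendsto (fun N : ℕ => (N : ℝ) ^ (-α)) atTop (nhds 0) :=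
      (tendsto_rpow_neg_atTop hα0).comp tendsto_natCast_atTop_atTop
    have := h1.const_mul (μ * Δ)
    simpa using this
  have hxW : Tendsto x atTop (nhdsWithin (0:ℝ) {t | t ≠ 0}) := by
    rw [tendsto_nhdsWithin_iff]
    refine ⟨hx0, ?_⟩
    filter_upwards [eventually_ge_atTop 1] with N hN
    exact (hxpos N hN).ne'
  -- the model function
  have hG : Tendsto (fun N : ℕ => EΛ / μ * (N : ℝ) ^ (α - 1) +
      (Δ * VarΛ / μ) * ((1 - Real.exp (-(x N))) / (x N * (1 + Real.exp (-(x N))))))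
      atTop (nhds (Δ * VarΛ / (2 * μ))) := by
    have h1 : Tendsto (fun N : ℕ => (N : ℝ) ^ (α - 1)) atTop (nhds 0) := by
      have := (tendsto_rpow_neg_atTop (by linarith : 0 < 1 - α)).comp
        (tendsto_natCast_atTop_atTop (R := ℝ))
      refine this.congr ?_
      intro N; simp [neg_sub]
    have h2 := aux_g_tendsto.comp hxW
    have := ((h1.const_mul (EΛ / μ)).add ((h2.const_mul (Δ * VarΛ / μ))))
    have heq : EΛ / μ * 0 + Δ * VarΛ / μ * (1/2) = Δ * VarΛ / (2 * μ) := by ring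
    rw [heq] at this
    exact this
  refine hG.congr' ?_
  filter_upwards [eventually_ge_atTop 1] with N hN
  have hn : (0:ℝ) < (N:ℝ) := by exact_mod_cast hN
  have hxN := hxpos N hN
  have he : 0 < 1 + Real.exp (-(x N)) := by positivity
  have hp : (0:ℝ) < (N:ℝ) ^ ((2:ℝ) - α) := Real.rpow_pos_of_pos hn _
  have key1 : (N:ℝ) ^ (α - 1) * (N:ℝ) ^ ((2:ℝ) - α) = (N:ℝ) := by
    rw [← Real.rpow_add hn]; norm_num
  rw [hVarM N, add_div]
  congr 1
  · field_simp
    rw [show EΛ * (N:ℝ)^(α-1) * (N:ℝ)^((2:ℝ)-α)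
        = ((N:ℝ)^(α-1) * (N:ℝ)^((2:ℝ)-α)) * EΛ from by ring, key1]
    ring
  · rw [eq_div_iff hp.ne']
    have ha : (0:ℝ) < (N:ℝ)^α := Real.rpow_pos_of_pos hn _
    have hkey2 : (N:ℝ)^((2:ℝ)-α) * (N:ℝ)^α = (N:ℝ)^2 := by
      rw [← Real.rpow_add hn, show ((2:ℝ)-α)+α = ((2:ℕ):ℝ) from by ring, Real.rpow_natCast]
    have hne : (N:ℝ)^(-α) = ((N:ℝ)^α)⁻¹ := Real.rpow_neg hn.le α
    simp only [hxdef]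
    rw [hne, ← hkey2]
    have heα : 0 < 1 + Real.exp (-(μ * Δ * ((N:ℝ)^α)⁻¹)) := by positivity
    field_simp
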